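/- Let R be a ring. The following are equivalent: (1) R is a semisimple artinian ring; (2) R is SIP as a right R-module and every right R-module has a SIP-cover; (3) R is SIP as a right R-module and every 2-generated right R-module has a SIP-cover; (4) R is SIP as a right R-module and every right R-module has a SIP-envelope; (5) R is SIP as a right R-module and every 2-generated right R-module has a SIP-envelope. -/

import Mathlib

universe u v w

section Defs

variable {S : Type u} [Ring S]

/-- A submodule `A` is a direct summand of `M`. -/
def IsDirectSummand {M : Type v} [AddCommGroup M] [Module S M] (A : Submodule S M) : Prop :=
  ∃ B : Submodule S M, A ⊓ B = ⊥ ∧ A ⊔ B = ⊤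

/-- `A` is an essential submodule of `B`. -/
def IsEssentialIn {M : Type v} [AddCommGroup M] [Module S M] (A B : Submodule S M) : Prop :=
  A ≤ B ∧ ∀ K : Submodule S M, K ≤ B → K ≠ ⊥ → A ⊓ K ≠ ⊥

/-- `A` is essential in some direct summand of `M`. -/
def EssentialInSummand {M : Type v} [AddCommGroup M] [Module S M] (A : Submodule S M) : Prop :=
  ∃ D : Submodule S M, IsDirectSummand D ∧ IsEssentialIn A D

/-- `A` is a small (superfluous) submodule of `M`. -/
def IsSmallSubmodule {M : Type v} [AddCommGroup M] [Module S M] (A : Submodule S M) : Prop :=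
  ∀ K : Submodule S M, A ⊔ K = ⊤ → K = ⊤

/-- `A` lies above the direct summand `D` of `M`, i.e. `D ≤ A` and `A/D` is small in `M/D`. -/
def LiesAbove {M : Type v} [AddCommGroup M] [Module S M] (A D : Submodule S M) : Prop :=
  IsDirectSummand D ∧ D ≤ A ∧ IsSmallSubmodule (Submodule.map D.mkQ A)

/-- `A` lies above some direct summand of `M`. -/
def LiesAboveSummand {M : Type v} [AddCommGroup M] [Module S M] (A : Submodule S M) : Prop :=
  ∃ D : Submodule S M, LiesAbove A D

end Defs

section ModDefs

variable (S : Type u) [Ring S]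

/-- SSP: the sum of any two direct summands is a direct summand. -/
def HasSSP (M : Type v) [AddCommGroup M] [Module S M] : Prop :=
  ∀ A B : Submodule S M, IsDirectSummand A → IsDirectSummand B → IsDirectSummand (A ⊔ B)

/-- SIP: the intersection of any two direct summands is a direct summand. -/
def HasSIP (M : Type v) [AddCommGroup M] [Module S M] : Prop :=
  ∀ A B : Submodule S M, IsDirectSummand A → IsDirectSummand B → IsDirectSummand (A ⊓ B)

/-- SIP-CS: the intersection of any finite family of direct summands is essential in a
direct summand. -/
def IsSIPCS (M : Type v) [AddCommGroup M] [Module S M] : Prop :=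
  ∀ (ι : Type) [Fintype ι] (A : ι → Submodule S M),
    (∀ i, IsDirectSummand (A i)) → EssentialInSummand (⨅ i, A i)

/-- SSP-lifting: if each member of a finite family of submodules lies above a direct summand,
then their sum lies above a direct summand. -/
def IsSSPLifting (M : Type v) [AddCommGroup M] [Module S M] : Prop :=
  ∀ (ι : Type) [Fintype ι] (A : ι → Submodule S M),
    (∀ i, LiesAboveSummand (A i)) → LiesAboveSummand (⨆ i, A i)

/-- C2 condition: every submodule isomorphic to a direct summand is a direct summand. -/
def HasC2 (M : Type v) [AddCommGroup M] [Module S M] : Prop :=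
  ∀ A B : Submodule S M, IsDirectSummand B → Nonempty (A ≃ₗ[S] B) → IsDirectSummand A

/-- C3 condition: the sum of two direct summands with zero intersection is a direct summand. -/
def HasC3 (M : Type v) [AddCommGroup M] [Module S M] : Prop :=
  ∀ A B : Submodule S M, IsDirectSummand A → IsDirectSummand B → A ⊓ B = ⊥ →
    IsDirectSummand (A ⊔ B)

/-- D2 condition: if `M/A` is isomorphic to a direct summand of `M` then `A` is a direct
summand. -/
def HasD2 (M : Type v) [AddCommGroup M] [Module S M] : Prop :=
  ∀ A : Submodule S M, (∃ B : Submodule S M, IsDirectSummand B ∧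
    Nonempty ((M ⧸ A) ≃ₗ[S] B)) → IsDirectSummand A

/-- D3 condition: if two direct summands sum to `M`, their intersection is a direct summand. -/
def IsD3Module (M : Type v) [AddCommGroup M] [Module S M] : Prop :=
  ∀ A B : Submodule S M, IsDirectSummand A → IsDirectSummand B → A ⊔ B = ⊤ →
    IsDirectSummand (A ⊓ B)

/-- `M` is relatively CS-Rickart to `N`. -/
def RelCSRickart (M : Type v) (N : Type w) [AddCommGroup M] [Module S M]
    [AddCommGroup N] [Module S N] : Prop :=
  ∀ φ : M →ₗ[S] N, EssentialInSummand (LinearMap.ker φ)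

/-- `M` is relatively d-CS-Rickart to `N`. -/
def RelDCSRickart (M : Type v) (N : Type w) [AddCommGroup M] [Module S M]
    [AddCommGroup N] [Module S N] : Prop :=
  ∀ φ : N →ₗ[S] M, LiesAboveSummand (LinearMap.range φ)

/-- CS-Rickart module. -/
def IsCSRickart (M : Type v) [AddCommGroup M] [Module S M] : Prop :=
  RelCSRickart S M M

/-- d-CS-Rickart module. -/
def IsDCSRickart (M : Type v) [AddCommGroup M] [Module S M] : Prop :=
  RelDCSRickart S M M

/-- `M` has an `Ω`-cover, where `Ω` is the class of modules satisfying `P`. -/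
def HasCover (P : ModuleCat.{v} S → Prop) (M : Type v) [AddCommGroup M] [Module S M] : Prop :=
  ∃ (E : ModuleCat.{v} S) (g : E →ₗ[S] M), P E ∧
    (∀ (E' : ModuleCat.{v} S), P E' → ∀ g' : E' →ₗ[S] M,
      ∃ h : E' →ₗ[S] E, g ∘ₗ h = g') ∧
    (∀ h : E →ₗ[S] E, g ∘ₗ h = g → Function.Bijective h)

/-- `M` has an `Ω`-envelope, where `Ω` is the class of modules satisfying `P`. -/
def HasEnvelope (P : ModuleCat.{v} S → Prop) (M : Type v) [AddCommGroup M] [Module S M] : Prop :=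
  ∃ (E : ModuleCat.{v} S) (g : M →ₗ[S] E), P E ∧
    (∀ (E' : ModuleCat.{v} S), P E' → ∀ g' : M →ₗ[S] E',
      ∃ h : E →ₗ[S] E', h ∘ₗ g = g') ∧
    (∀ h : E →ₗ[S] E, h ∘ₗ g = g → Function.Bijective h)

/-- `M` is 2-generated. -/
def TwoGenerated (M : Type v) [AddCommGroup M] [Module S M] : Prop :=
  ∃ a b : M, Submodule.span S ({a, b} : Set M) = ⊤

/-- `M` is finitely cogenerated. -/
def FinitelyCogenerated (M : Type v) [AddCommGroup M] [Module S M] : Prop :=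
  ∀ 𝒜 : Set (Submodule S M), sInf 𝒜 = ⊥ →
    ∃ ℬ ⊆ 𝒜, ℬ.Finite ∧ sInf ℬ = ⊥

/-- The socle of `M`: the sum of all simple submodules. -/
def SocleOf (M : Type v) [AddCommGroup M] [Module S M] : Submodule S M :=
  sSup {A : Submodule S M | IsSimpleModule S ↥A}

/-- An indecomposable module: nonzero, and its only direct summands are `0` and itself. -/
def IsIndecomposable (M : Type v) [AddCommGroup M] [Module S M] : Prop :=
  (⊤ : Submodule S M) ≠ ⊥ ∧
    ∀ A : Submodule S M, IsDirectSummand A → A = ⊥ ∨ A = ⊤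

end ModDefs

section RingDefs

variable (R : Type u) [Ring R]

/-- The right annihilator of an element of a right `R`-module, as a right ideal of `R`. -/
def rightAnnihilator {M : Type v} [AddCommGroup M] [Module Rᵐᵒᵖ M] (m : M) :
    Submodule Rᵐᵒᵖ R where
  carrier := {r : R | MulOpposite.op r • m = 0}
  add_mem' := by
    intro a b ha hb
    simp only [Set.mem_setOf_eq] at *
    rw [MulOpposite.op_add, add_smul, ha, hb, add_zero]
  zero_mem' := by simp
  smul_mem' := by
    intro c x hx
    simp only [Set.mem_setOf_eq] at *
    have : MulOpposite.op (c • x) = c * MulOpposite.op x := by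
      rw [MulOpposite.smul_eq_mul_unop]
      simp [MulOpposite.op_mul]
    rw [this, mul_smul, hx, smul_zero]

/-- `M` is a nonsingular right `R`-module. -/
def IsNonsingular (M : Type v) [AddCommGroup M] [Module Rᵐᵒᵖ M] : Prop :=
  ∀ m : M, IsEssentialIn (rightAnnihilator R m) (⊤ : Submodule Rᵐᵒᵖ R) → m = 0

/-- `R` is a right V-ring: every simple right `R`-module is injective. -/
def IsRightVRing : Prop :=
  ∀ (N : Type u) [AddCommGroup N] [Module Rᵐᵒᵖ N],
    IsSimpleModule Rᵐᵒᵖ N → Module.Injective Rᵐᵒᵖ N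

/-- `R` is semiregular: `R/J(R)` is von Neumann regular and idempotents lift modulo `J(R)`. -/
def IsSemiregularRing : Prop :=
  (∀ a : R, ∃ b : R, a - a * b * a ∈ Ideal.jacobson (⊥ : Ideal R) ∧ b = b * a * b) ∧
  (∀ a : R, a * a - a ∈ Ideal.jacobson (⊥ : Ideal R) →
    ∃ e : R, e * e = e ∧ e - a ∈ Ideal.jacobson (⊥ : Ideal R))

end RingDefs


section AuxProofs

open MulOpposite

variable {S : Type u} [Ring S]

theorem isDirectSummand_of_isCompl {M : Type v} [AddCommGroup M] [Module S M]
    {A B : Submodule S M} (h : IsCompl A B) : IsDirectSummand A :=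
  ⟨B, disjoint_iff.mp h.disjoint, codisjoint_iff.mp h.codisjoint⟩

theorem hasSIP_of_semisimple {M : Type v} [AddCommGroup M] [Module S M]
    [IsSemisimpleModule S M] : HasSIP S M := fun A B _ _ =>
  (exists_isCompl (A ⊓ B)).elim fun _ hC => isDirectSummand_of_isCompl hC

theorem isDirectSummand_orderIso {M : Type v} {N : Type w} [AddCommGroup M] [Module S M]
    [AddCommGroup N] [Module S N] (f : Submodule S M ≃o Submodule S N)
    {A : Submodule S M} (h : IsDirectSummand A) : IsDirectSummand (f A) := by
  obtain ⟨B, h1, h2⟩ := h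
  refine ⟨f B, ?_, ?_⟩
  · rw [← f.map_inf, h1, f.map_bot]
  · rw [← f.map_sup, h2, f.map_top]

theorem hasSIP_congr {M : Type v} {N : Type w} [AddCommGroup M] [Module S M]
    [AddCommGroup N] [Module S N] (e : M ≃ₗ[S] N) (h : HasSIP S M) : HasSIP S N := by
  intro A B hA hB
  set f := Submodule.orderIsoMapComap e with hf
  have hA' := isDirectSummand_orderIso f.symm hA
  have hB' := isDirectSummand_orderIso f.symm hB
  have := isDirectSummand_orderIso f (h _ _ hA' hB')
  rwa [f.map_inf, f.apply_symm_apply, f.apply_symm_apply] at this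

theorem hasSIP_of_simple {M : Type v} [AddCommGroup M] [Module S M]
    (h : ∀ A : Submodule S M, A = ⊥ ∨ A = ⊤) : HasSIP S M := by
  intro A B _ _
  rcases h (A ⊓ B) with h' | h'
  · exact ⟨⊤, by rw [h', bot_inf_eq], by rw [h', bot_sup_eq]⟩
  · exact ⟨⊥, by rw [h', top_inf_eq], by rw [h', top_sup_eq]⟩

/-- Left multiplication as an endomorphism of the right `R`-module `R`. -/
def lmulRight (R : Type u) [Ring R] (r : R) : R →ₗ[Rᵐᵒᵖ] R where
  toFun x := r * x
  map_add' := mul_add r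
  map_smul' c x := by
    simp only [MulOpposite.smul_eq_mul_unop, RingHom.id_apply, mul_assoc]

/-- `R` as a right `R`-module is isomorphic to `Rᵐᵒᵖ` as a module over itself. -/
def opRightEquiv (R : Type u) [Ring R] : R ≃ₗ[Rᵐᵒᵖ] Rᵐᵒᵖ where
  toFun := op
  invFun := unop
  left_inv _ := rfl
  right_inv _ := rfl
  map_add' _ _ := rfl
  map_smul' c x := by
    simp only [MulOpposite.smul_eq_mul_unop, RingHom.id_apply, op_mul, op_unop, smul_eq_mul]

section LeftSS

variable (R : Type u) [Ring R]

theorem exists_idem_span [IsSemisimpleRing R] (L : Submodule R R) :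
    ∃ e : R, e * e = e ∧ L = Submodule.span R {e} := by
  obtain ⟨C, hC⟩ := exists_isCompl L
  set π : R →ₗ[R] R := L.subtype.comp (L.linearProjOfIsCompl C hC) with hπdef
  have hπ : ∀ x ∈ L, π x = x := fun x hx =>
    congrArg Subtype.val (Submodule.linearProjOfIsCompl_apply_left hC ⟨x, hx⟩)
  have he1 : π 1 ∈ L := (L.linearProjOfIsCompl C hC 1).2
  have hsm : ∀ r : R, π r = r * π 1 := fun r => by
    have : π (r • (1 : R)) = r • π 1 := map_smul π r 1
    simpa [smul_eq_mul] using this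
  refine ⟨π 1, ?_, ?_⟩
  · have h1 := hπ (π 1) he1
    have h2 := hsm (π 1)
    rw [h1] at h2; exact h2.symm
  · apply le_antisymm
    · intro x hx
      rw [Submodule.mem_span_singleton]
      exact ⟨x, by rw [smul_eq_mul, ← hsm x, hπ x hx]⟩
    · rw [Submodule.span_le, Set.singleton_subset_iff]; exact he1

theorem semisimple_vnr [IsSemisimpleRing R] (a : R) : ∃ x : R, a * x * a = a := by
  obtain ⟨e, _, hspan⟩ := exists_idem_span R (Submodule.span R {a})
  obtain ⟨C, hC⟩ := exists_isCompl (Submodule.span R {a})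
  set L := Submodule.span R {a} with hLdef
  set π : R →ₗ[R] R := L.subtype.comp (L.linearProjOfIsCompl C hC) with hπdef
  have hπ : ∀ x ∈ L, π x = x := fun x hx =>
    congrArg Subtype.val (Submodule.linearProjOfIsCompl_apply_left hC ⟨x, hx⟩)
  have he1 : π 1 ∈ L := (L.linearProjOfIsCompl C hC 1).2
  obtain ⟨c, hc⟩ := Submodule.mem_span_singleton.mp he1
  rw [smul_eq_mul] at hc
  have hsm : π a = a * π 1 := by
    have : π (a • (1 : R)) = a • π 1 := map_smul π a 1
    simpa [smul_eq_mul] using this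
  have ha : π a = a := hπ a (Submodule.mem_span_singleton_self a)
  refine ⟨c, ?_⟩
  calc a * c * a = a * (c * a) := by rw [mul_assoc]
  _ = a * π 1 := by rw [hc]
  _ = a := by rw [← hsm, ha]

theorem right_atom (sp : ∀ a : R, (∀ r : R, a * r * a = 0) → a = 0)
    {e : R} (he : e * e = e) (hL : IsAtom (Submodule.span R {e})) :
    IsAtom (Submodule.span Rᵐᵒᵖ {e} : Submodule Rᵐᵒᵖ R) := by
  have he0 : e ≠ 0 := by
    intro h
    exact hL.1 (by rw [h, Submodule.span_zero_singleton])
  -- every nonzero element of eRe has a left inverse in eRe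
  have linv : ∀ z : R, e * z * e = z → z ≠ 0 → ∃ w : R, e * w * e = w ∧ w * z = e := by
    intro z hz hz0
    have hez : e * z = z := by
      conv_lhs => rw [← hz]
      have h1 : e * (e * z * e) = e * e * z * e := by noncomm_ring
      rw [h1, he, hz]
    have hmem : z ∈ Submodule.span R {e} := by
      rw [Submodule.mem_span_singleton]
      exact ⟨e * z, by rw [smul_eq_mul, hz]⟩
    have hspan : Submodule.span R {z} = Submodule.span R {e} := by
      have hle : Submodule.span R {z} ≤ Submodule.span R {e} := by
        rw [Submodule.span_le, Set.singleton_subset_iff]; exact hmem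
      rcases eq_or_lt_of_le hle with h | h
      · exact h
      · exfalso
        have h2 := hL.2 _ h
        have h3 : z ∈ Submodule.span R ({z} : Set R) := Submodule.mem_span_singleton_self z
        rw [h2, Submodule.mem_bot] at h3
        exact hz0 h3
    have he_mem : e ∈ Submodule.span R {z} := by
      rw [hspan]; exact Submodule.mem_span_singleton_self e
    obtain ⟨y, hy⟩ := Submodule.mem_span_singleton.mp he_mem
    rw [smul_eq_mul] at hy
    refine ⟨e * y * e, ?_, ?_⟩
    · have h1 : e * (e * y * e) * e = e * e * y * (e * e) := by noncomm_ring
      rw [h1, he]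
    · calc (e * y * e) * z = e * y * (e * z) := by noncomm_ring
      _ = e * y * z := by rw [hez]
      _ = e * (y * z) := by noncomm_ring
      _ = e * e := by rw [hy]
      _ = e := he
  -- two-sided inverses
  have div : ∀ z : R, e * z * e = z → z ≠ 0 → ∃ w : R, z * w = e := by
    intro z hz hz0
    obtain ⟨w, hw, hwz⟩ := linv z hz hz0
    have hw0 : w ≠ 0 := by
      intro h; rw [h, zero_mul] at hwz; exact he0 hwz.symm
    obtain ⟨v, hv, hvw⟩ := linv w hw hw0
    have hez : e * z = z := by
      conv_lhs => rw [← hz]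
      have h1 : e * (e * z * e) = e * e * z * e := by noncomm_ring
      rw [h1, he, hz]
    have hve : v * e = v := by
      conv_lhs => rw [← hv]
      have h1 : (e * v * e) * e = e * v * (e * e) := by noncomm_ring
      rw [h1, he, hv]
    have hzv : z = v := by
      calc z = e * z := hez.symm
      _ = (v * w) * z := by rw [hvw]
      _ = v * (w * z) := by rw [mul_assoc]
      _ = v * e := by rw [hwz]
      _ = v := hve
    exact ⟨w, by rw [hzv, hvw]⟩
  constructor
  · intro h
    apply he0
    have : e ∈ (⊥ : Submodule Rᵐᵒᵖ R) := h ▸ Submodule.mem_span_singleton_self e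
    simpa using this
  · intro b hb
    by_contra hbne
    obtain ⟨a, haB, ha0⟩ := (Submodule.ne_bot_iff b).mp hbne
    have hale : a ∈ Submodule.span Rᵐᵒᵖ ({e} : Set R) := hb.le haB
    obtain ⟨c, hc⟩ := Submodule.mem_span_singleton.mp hale
    rw [MulOpposite.smul_eq_mul_unop] at hc
    have hea : e * a = a := by
      rw [← hc, ← mul_assoc, he]
    obtain ⟨r, hr⟩ : ∃ r : R, a * r * a ≠ 0 := by
      by_contra h
      push_neg at h
      exact ha0 (sp a h)
    set z := a * r * e with hzdef
    have hze : e * z * e = z := by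
      rw [hzdef]
      have h1 : e * (a * r * e) * e = (e * a) * r * (e * e) := by noncomm_ring
      rw [h1, hea, he]
    have hz0 : z ≠ 0 := by
      intro h
      apply hr
      calc a * r * a = a * r * (e * a) := by rw [hea]
      _ = (a * r * e) * a := by noncomm_ring
      _ = 0 := by rw [← hzdef, h, zero_mul]
    obtain ⟨w, hw⟩ := div z hze hz0
    have heB : e ∈ b := by
      have h5 : a * (r * (e * w)) = e := by
        have h1 : a * (r * (e * w)) = (a * r * e) * w := by noncomm_ring
        rw [h1, ← hzdef, hw]
      have := b.smul_mem (op (r * (e * w))) haB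
      rwa [MulOpposite.smul_eq_mul_unop, unop_op, h5] at this
    exact hb.not_ge (by
      rw [Submodule.span_le, Set.singleton_subset_iff]; exact heB)

theorem rightSelf_semisimple [IsSemisimpleRing R] : IsSemisimpleModule Rᵐᵒᵖ R := by
  apply IsSemisimpleModule.of_sSup_simples_eq_top
  set T := sSup {m : Submodule Rᵐᵒᵖ R | IsSimpleModule Rᵐᵒᵖ m} with hT
  have sp : ∀ a : R, (∀ r : R, a * r * a = 0) → a = 0 := by
    intro a h
    obtain ⟨x, hx⟩ := semisimple_vnr R a
    rw [← hx, h x]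
  -- T is closed under left multiplication
  have key : ∀ (r : R) (L : Submodule Rᵐᵒᵖ R), IsSimpleModule Rᵐᵒᵖ L →
      ∀ x ∈ L, r * x ∈ T := by
    intro r L hL x hx
    have : IsSimpleModule Rᵐᵒᵖ L := hL
    have hle : Submodule.map (lmulRight R r) L ≤ T := by
      have hrange : Submodule.map (lmulRight R r) L
          = LinearMap.range ((lmulRight R r).comp L.subtype) := by
        rw [LinearMap.range_comp, Submodule.range_subtype]
      rcases LinearMap.injective_or_eq_zero ((lmulRight R r).comp L.subtype) with hinj | hzero
      · have hsimp : IsSimpleModule Rᵐᵒᵖ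
            (LinearMap.range ((lmulRight R r).comp L.subtype)) :=
          IsSimpleModule.congr (LinearEquiv.ofInjective _ hinj).symm
        rw [hrange]
        exact le_sSup (show _ ∈ {m : Submodule Rᵐᵒᵖ R | IsSimpleModule Rᵐᵒᵖ m} from hsimp)
      · rw [hrange, hzero, LinearMap.range_zero]
        exact bot_le
    exact hle (Submodule.mem_map_of_mem hx)
  have stab : ∀ (r : R), ∀ x ∈ T, r * x ∈ T := by
    intro r x hx
    rw [hT, sSup_eq_iSup'] at hx
    refine Submodule.iSup_induction (motive := fun y => r * y ∈ T) _ hx ?_ ?_ ?_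
    · rintro ⟨L, hL⟩ x hx
      exact key r L hL x hx
    · show r * 0 ∈ T
      rw [mul_zero]; exact T.zero_mem
    · intro x y hx hy
      show r * (x + y) ∈ T
      rw [mul_add]; exact T.add_mem hx hy
  have one_mem : (1 : R) ∈ T := by
    set Tl : Submodule R R :=
      { carrier := (T : Set R)
        add_mem' := fun ha hb => T.add_mem ha hb
        zero_mem' := T.zero_mem
        smul_mem' := fun c x hx => stab c x hx } with hTl
    have hsimple : ∀ L : Submodule R R, IsSimpleModule R L → L ≤ Tl := by
      intro L hLs
      obtain ⟨e, hee, hLe⟩ := exists_idem_span R L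
      have hatom : IsAtom (Submodule.span R ({e} : Set R)) := by
        rw [← hLe]; exact isSimpleModule_iff_isAtom.mp hLs
      have hratom := right_atom R sp hee hatom
      have heT : e ∈ T := by
        have hsimp : IsSimpleModule Rᵐᵒᵖ (Submodule.span Rᵐᵒᵖ ({e} : Set R)) :=
          isSimpleModule_iff_isAtom.mpr hratom
        exact le_sSup (show _ ∈ {m : Submodule Rᵐᵒᵖ R | IsSimpleModule Rᵐᵒᵖ m} from hsimp)
          (Submodule.mem_span_singleton_self e)
      rw [hLe, Submodule.span_le, Set.singleton_subset_iff]
      exact heT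
    have htop : (⊤ : Submodule R R) ≤ Tl := by
      rw [← IsSemisimpleModule.sSup_simples_eq_top R R]
      exact sSup_le fun L hL => hsimple L hL
    exact htop trivial
  rw [Submodule.eq_top_iff']
  intro x
  have := T.smul_mem (op x) one_mem
  rwa [MulOpposite.smul_eq_mul_unop, unop_op, one_mul] at this

theorem isSemisimpleRing_op [IsSemisimpleRing R] : IsSemisimpleRing Rᵐᵒᵖ := by
  have := rightSelf_semisimple R
  exact IsSemisimpleModule.congr (opRightEquiv R).symm

theorem isSemisimpleRing_of_right (h : IsSemisimpleModule Rᵐᵒᵖ R) : IsSemisimpleRing R := by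
  have h1 : IsSemisimpleRing Rᵐᵒᵖ := by
    have := h
    exact IsSemisimpleModule.congr (opRightEquiv R).symm
  have h2 : IsSemisimpleRing Rᵐᵒᵖᵐᵒᵖ := isSemisimpleRing_op Rᵐᵒᵖ
  exact (RingEquiv.opOp R).symm.isSemisimpleRing

/-- If every maximal right ideal is a direct summand, the ring is right semisimple. -/
theorem semisimple_of_coatom_summand
    (h : ∀ m : Submodule Rᵐᵒᵖ R, IsCoatom m → IsDirectSummand m) :
    IsSemisimpleModule Rᵐᵒᵖ R := by
  apply IsSemisimpleModule.of_sSup_simples_eq_top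
  by_contra hT
  set T := sSup {m : Submodule Rᵐᵒᵖ R | IsSimpleModule Rᵐᵒᵖ m} with hTdef
  set oi := Submodule.orderIsoMapComap (opRightEquiv R) with hoi
  have hne : oi T ≠ ⊤ := by
    intro h'
    rw [← oi.map_top] at h'
    exact hT (oi.injective h')
  obtain ⟨Mx, hMx, hle⟩ := Ideal.exists_le_maximal (oi T) hne
  have hcoatomM : IsCoatom Mx := Ideal.isMaximal_def.mp hMx
  set m := oi.symm Mx with hm
  have hcoatom : IsCoatom m := by
    have : IsCoatom (oi m) := by rw [hm, oi.apply_symm_apply]; exact hcoatomM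
    exact (OrderIso.isCoatom_iff oi m).mp this
  have hTm : T ≤ m := by
    rw [hm, oi.le_symm_apply]
    exact hle
  obtain ⟨C, hinf, hsup⟩ := h m hcoatom
  have hCne : C ≠ ⊥ := by
    intro h'
    rw [h', sup_bot_eq] at hsup
    exact hcoatom.1 hsup
  have hcompl : IsCompl m C := ⟨disjoint_iff.mpr hinf, codisjoint_iff.mpr hsup⟩
  have hsimpleC : IsSimpleModule Rᵐᵒᵖ C := by
    have hsimpleQ : IsSimpleModule Rᵐᵒᵖ (R ⧸ m) := isSimpleModule_iff_isCoatom.mpr hcoatom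
    exact IsSimpleModule.congr (Submodule.quotientEquivOfIsCompl m C hcompl).symm
  have hCT : C ≤ T :=
    le_sSup (show _ ∈ {m : Submodule Rᵐᵒᵖ R | IsSimpleModule Rᵐᵒᵖ m} from hsimpleC)
  have hCm : C ≤ m := le_trans hCT hTm
  exact hCne (by rw [← hinf]; exact (inf_eq_right.mpr hCm).symm)

end LeftSS

end AuxProofs


section Engines

open MulOpposite

variable (R : Type u) [Ring R]

theorem summand_of_hasSIP_prod (m : Submodule Rᵐᵒᵖ R)
    (h : HasSIP Rᵐᵒᵖ (R × (R ⧸ m))) : IsDirectSummand m := by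
  set q := m.mkQ with hq
  set A : Submodule Rᵐᵒᵖ (R × (R ⧸ m)) := Submodule.prod ⊤ ⊥ with hA
  set B : Submodule Rᵐᵒᵖ (R × (R ⧸ m)) :=
    LinearMap.range (LinearMap.prod LinearMap.id q) with hB
  set C : Submodule Rᵐᵒᵖ (R × (R ⧸ m)) := Submodule.prod ⊥ ⊤ with hC
  have hmemA : ∀ z : R × (R ⧸ m), z ∈ A ↔ z.2 = 0 := by
    intro z
    rw [hA, Submodule.mem_prod]
    simp [Submodule.mem_bot]
  have hmemC : ∀ z : R × (R ⧸ m), z ∈ C ↔ z.1 = 0 := by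
    intro z
    rw [hC, Submodule.mem_prod]
    simp [Submodule.mem_bot]
  have hAsum : IsDirectSummand A := by
    refine ⟨C, ?_, ?_⟩
    · rw [eq_bot_iff]
      intro z hz
      rw [Submodule.mem_inf] at hz
      obtain ⟨h1, h2⟩ := hz
      rw [hmemA] at h1
      rw [hmemC] at h2
      rw [Submodule.mem_bot]
      exact Prod.ext h2 h1
    · rw [eq_top_iff]
      intro z _
      refine Submodule.mem_sup.mpr ⟨(z.1, 0), ?_, (0, z.2), ?_, ?_⟩
      · rw [hmemA]
      · rw [hmemC]
      · exact Prod.ext (by simp) (by simp)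
  have hBsum : IsDirectSummand B := by
    refine ⟨C, ?_, ?_⟩
    · rw [eq_bot_iff]
      intro z hz
      rw [Submodule.mem_inf] at hz
      obtain ⟨h1, h2⟩ := hz
      obtain ⟨r, hr⟩ := h1
      rw [hmemC] at h2
      rw [Submodule.mem_bot]
      have hr1 : r = z.1 := congrArg Prod.fst hr
      have hr2 : q r = z.2 := congrArg Prod.snd hr
      rw [h2] at hr1
      rw [hr1, map_zero] at hr2
      exact Prod.ext h2 hr2.symm
    · rw [eq_top_iff]
      intro z _
      refine Submodule.mem_sup.mpr ⟨(z.1, q z.1), ⟨z.1, rfl⟩, (0, z.2 - q z.1), ?_, ?_⟩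
      · rw [hmemC]
      · exact Prod.ext (by simp) (by simp)
  have hAB : A ⊓ B = m.prod ⊥ := by
    ext z
    rw [Submodule.mem_inf]
    constructor
    · rintro ⟨h1, h2⟩
      rw [hmemA] at h1
      obtain ⟨r, hr⟩ := h2
      have hr1 : r = z.1 := congrArg Prod.fst hr
      have hr2 : q r = z.2 := congrArg Prod.snd hr
      rw [hr1] at hr2
      rw [h1] at hr2
      rw [Submodule.mem_prod]
      refine ⟨?_, by simp [Submodule.mem_bot, h1]⟩
      rw [← Submodule.Quotient.mk_eq_zero]
      exact hr2
    · intro hz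
      rw [Submodule.mem_prod] at hz
      obtain ⟨h1, h2⟩ := hz
      rw [Submodule.mem_bot] at h2
      constructor
      · rw [hmemA]; exact h2
      · refine ⟨z.1, ?_⟩
        refine Prod.ext rfl ?_
        show q z.1 = z.2
        rw [h2]
        rw [← Submodule.Quotient.mk_eq_zero] at h1
        exact h1
  have hsum := h A B hAsum hBsum
  rw [hAB] at hsum
  obtain ⟨D, hinf, hsup⟩ := hsum
  have hle : m.prod ⊥ ≤ A := by
    intro z hz
    rw [Submodule.mem_prod] at hz
    rw [hmemA]
    rw [← Submodule.mem_bot (R := Rᵐᵒᵖ)]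
    exact hz.2
  refine ⟨Submodule.comap (LinearMap.inl Rᵐᵒᵖ R (R ⧸ m)) D, ?_, ?_⟩
  · rw [eq_bot_iff]
    intro x hx
    rw [Submodule.mem_inf] at hx
    obtain ⟨hx1, hx2⟩ := hx
    have : ((x, 0) : R × (R ⧸ m)) ∈ m.prod ⊥ ⊓ D := by
      rw [Submodule.mem_inf]
      constructor
      · rw [Submodule.mem_prod]; exact ⟨hx1, by simp⟩
      · exact hx2
    rw [hinf, Submodule.mem_bot] at this
    rw [Submodule.mem_bot]
    exact congrArg Prod.fst this
  · rw [eq_top_iff]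
    intro x _
    have hxA : ((x, 0) : R × (R ⧸ m)) ∈ A := by rw [hmemA]
    have hx : ((x, 0) : R × (R ⧸ m)) ∈ m.prod ⊥ ⊔ (D ⊓ A) := by
      rw [← sup_inf_assoc_of_le D hle, hsup, top_inf_eq]
      exact hxA
    obtain ⟨u, hu, v, hv, huv⟩ := Submodule.mem_sup.mp hx
    rw [Submodule.mem_inf] at hv
    rw [Submodule.mem_prod] at hu
    refine Submodule.mem_sup.mpr ⟨u.1, hu.1, v.1, ?_, ?_⟩
    · show (LinearMap.inl Rᵐᵒᵖ R (R ⧸ m)) v.1 ∈ D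
      have hv2 : v.2 = 0 := by rw [← hmemA]; exact hv.2
      have : (LinearMap.inl Rᵐᵒᵖ R (R ⧸ m)) v.1 = v := Prod.ext rfl hv2.symm
      rw [this]
      exact hv.1
    · exact congrArg Prod.fst huv

theorem twoGen_prod (m : Submodule Rᵐᵒᵖ R) : TwoGenerated Rᵐᵒᵖ (R × (R ⧸ m)) := by
  refine ⟨((1 : R), (0 : R ⧸ m)), ((0 : R), Submodule.Quotient.mk 1), ?_⟩
  rw [Submodule.eq_top_iff']
  intro z
  obtain ⟨r, hr⟩ := Submodule.Quotient.mk_surjective m z.2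
  rw [Submodule.mem_span_pair]
  refine ⟨op z.1, op r, ?_⟩
  have e1 : op z.1 • ((1 : R), (0 : R ⧸ m)) = ((z.1 : R), (0 : R ⧸ m)) := by
    rw [Prod.smul_mk, MulOpposite.smul_eq_mul_unop, unop_op, one_mul, smul_zero]
  have e2 : op r • ((0 : R), (Submodule.Quotient.mk 1 : R ⧸ m)) = ((0 : R), z.2) := by
    rw [Prod.smul_mk, smul_zero, ← Submodule.Quotient.mk_smul,
      MulOpposite.smul_eq_mul_unop, unop_op, one_mul, hr]
  rw [e1, e2, Prod.mk_add_mk, add_zero, zero_add]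

theorem hasSIP_of_cover {N : Type u} [AddCommGroup N] [Module Rᵐᵒᵖ N]
    (hR : HasSIP Rᵐᵒᵖ R) (hN : HasSIP Rᵐᵒᵖ N)
    (hc : HasCover Rᵐᵒᵖ (fun E => HasSIP Rᵐᵒᵖ E) (R × N)) : HasSIP Rᵐᵒᵖ (R × N) := by
  obtain ⟨E, g, hE, hfac, hmin⟩ := hc
  obtain ⟨s, hs⟩ := hfac (ModuleCat.of Rᵐᵒᵖ R) hR (LinearMap.inl Rᵐᵒᵖ R N)
  obtain ⟨t, ht⟩ := hfac (ModuleCat.of Rᵐᵒᵖ N) hN (LinearMap.inr Rᵐᵒᵖ R N)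
  set h2 : E →ₗ[Rᵐᵒᵖ] E :=
    s ∘ₗ ((LinearMap.fst Rᵐᵒᵖ R N) ∘ₗ g) + t ∘ₗ ((LinearMap.snd Rᵐᵒᵖ R N) ∘ₗ g) with hh2
  have hsapp : ∀ a : R, g (s a) = ((a, 0) : R × N) := by
    intro a
    have h1 := LinearMap.congr_fun hs a
    rw [LinearMap.comp_apply] at h1
    rw [h1]; rfl
  have htapp : ∀ b : N, g (t b) = ((0, b) : R × N) := by
    intro b
    have h1 := LinearMap.congr_fun ht b
    rw [LinearMap.comp_apply] at h1
    rw [h1]; rfl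
  have heval : ∀ x : E, g (h2 x) = g x := by
    intro x
    have hx : h2 x = s ((g x).1) + t ((g x).2) := rfl
    rw [hx, map_add, hsapp, htapp, Prod.mk_add_mk, add_zero, zero_add]
  have hgh : g ∘ₗ h2 = g := LinearMap.ext heval
  have hbij := hmin h2 hgh
  have hinj : Function.Injective g := by
    intro x y hxy
    apply hbij.injective
    show s ((g x).1) + t ((g x).2) = s ((g y).1) + t ((g y).2)
    rw [hxy]
  have hsurj : Function.Surjective g := by
    intro z
    refine ⟨s z.1 + t z.2, ?_⟩
    rw [map_add, hsapp, htapp, Prod.mk_add_mk, add_zero, zero_add]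
  exact hasSIP_congr (LinearEquiv.ofBijective g ⟨hinj, hsurj⟩) hE

theorem hasSIP_of_envelope {N : Type u} [AddCommGroup N] [Module Rᵐᵒᵖ N]
    (hR : HasSIP Rᵐᵒᵖ R) (hN : HasSIP Rᵐᵒᵖ N)
    (hc : HasEnvelope Rᵐᵒᵖ (fun E => HasSIP Rᵐᵒᵖ E) (R × N)) : HasSIP Rᵐᵒᵖ (R × N) := by
  obtain ⟨E, u, hE, hfac, hmin⟩ := hc
  obtain ⟨p, hp⟩ := hfac (ModuleCat.of Rᵐᵒᵖ R) hR (LinearMap.fst Rᵐᵒᵖ R N)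
  obtain ⟨σ, hσ⟩ := hfac (ModuleCat.of Rᵐᵒᵖ N) hN (LinearMap.snd Rᵐᵒᵖ R N)
  set w : E →ₗ[Rᵐᵒᵖ] (R × N) :=
    (LinearMap.inl Rᵐᵒᵖ R N) ∘ₗ p + (LinearMap.inr Rᵐᵒᵖ R N) ∘ₗ σ with hw
  have hwu : ∀ x : R × N, w (u x) = x := by
    intro x
    have h1 := LinearMap.congr_fun hp x
    have h2 := LinearMap.congr_fun hσ x
    rw [LinearMap.comp_apply] at h1 h2
    have hx : w (u x) = ((p (u x), 0) : R × N) + ((0, σ (u x)) : R × N) := rfl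
    rw [hx, h1, h2]
    show ((x.1, 0) : R × N) + ((0, x.2) : R × N) = x
    rw [Prod.mk_add_mk, add_zero, zero_add]
  have hhu : (u ∘ₗ w) ∘ₗ u = u := LinearMap.ext fun x => by
    simp only [LinearMap.comp_apply]
    rw [hwu x]
  have hbij := hmin (u ∘ₗ w) hhu
  have hinj : Function.Injective u := by
    intro x y hxy
    rw [← hwu x, ← hwu y, hxy]
  have hsurj : Function.Surjective u := by
    intro z
    obtain ⟨y, hy⟩ := hbij.surjective z
    exact ⟨w y, hy⟩
  exact hasSIP_congr (LinearEquiv.ofBijective u ⟨hinj, hsurj⟩).symm hE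

theorem hasCover_self {M : Type u} [AddCommGroup M] [Module Rᵐᵒᵖ M]
    (h : HasSIP Rᵐᵒᵖ M) : HasCover Rᵐᵒᵖ (fun E => HasSIP Rᵐᵒᵖ E) M := by
  refine ⟨ModuleCat.of Rᵐᵒᵖ M, LinearMap.id, h, fun E' _ g' => ⟨g', LinearMap.id_comp g'⟩, ?_⟩
  intro h' hh
  rw [LinearMap.id_comp] at hh
  rw [hh]
  exact ⟨fun a b hab => hab, fun a => ⟨a, rfl⟩⟩

theorem hasEnvelope_self {M : Type u} [AddCommGroup M] [Module Rᵐᵒᵖ M]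
    (h : HasSIP Rᵐᵒᵖ M) : HasEnvelope Rᵐᵒᵖ (fun E => HasSIP Rᵐᵒᵖ E) M := by
  refine ⟨ModuleCat.of Rᵐᵒᵖ M, LinearMap.id, h, fun E' _ g' => ⟨g', LinearMap.comp_id g'⟩, ?_⟩
  intro h' hh
  rw [LinearMap.comp_id] at hh
  rw [hh]
  exact ⟨fun a b hab => hab, fun a => ⟨a, rfl⟩⟩

end Engines

/-- `R` is semisimple artinian iff `R_R` is SIP and every (2-generated) right
`R`-module has a SIP-cover, iff `R_R` is SIP and every (2-generated) right `R`-module has a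
SIP-envelope. -/
theorem statement_6 (R : Type u) [Ring R] :
    List.TFAE [
      IsSemisimpleRing R,
      HasSIP Rᵐᵒᵖ R ∧ ∀ (M : Type u) [AddCommGroup M] [Module Rᵐᵒᵖ M],
        HasCover Rᵐᵒᵖ (fun E => HasSIP Rᵐᵒᵖ E) M,
      HasSIP Rᵐᵒᵖ R ∧ ∀ (M : Type u) [AddCommGroup M] [Module Rᵐᵒᵖ M], TwoGenerated Rᵐᵒᵖ M →
        HasCover Rᵐᵒᵖ (fun E => HasSIP Rᵐᵒᵖ E) M,
      HasSIP Rᵐᵒᵖ R ∧ ∀ (M : Type u) [AddCommGroup M] [Module Rᵐᵒᵖ M],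
        HasEnvelope Rᵐᵒᵖ (fun E => HasSIP Rᵐᵒᵖ E) M,
      HasSIP Rᵐᵒᵖ R ∧ ∀ (M : Type u) [AddCommGroup M] [Module Rᵐᵒᵖ M], TwoGenerated Rᵐᵒᵖ M →
        HasEnvelope Rᵐᵒᵖ (fun E => HasSIP Rᵐᵒᵖ E) M] := by
  have imp31 : ∀ (hr : HasSIP Rᵐᵒᵖ R),
      (∀ m : Submodule Rᵐᵒᵖ R, IsCoatom m → HasSIP Rᵐᵒᵖ (R × (R ⧸ m))) →
      IsSemisimpleRing R := by
    intro hr hsip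
    apply isSemisimpleRing_of_right
    apply semisimple_of_coatom_summand
    intro m hm
    exact summand_of_hasSIP_prod R m (hsip m hm)
  have hNsip : ∀ m : Submodule Rᵐᵒᵖ R, IsCoatom m → HasSIP Rᵐᵒᵖ (R ⧸ m) := by
    intro m hm
    haveI : IsSimpleModule Rᵐᵒᵖ (R ⧸ m) := isSimpleModule_iff_isCoatom.mpr hm
    exact hasSIP_of_simple fun A => eq_bot_or_eq_top A
  tfae_have 1 → 2 := by
    intro h1
    haveI := h1
    haveI : IsSemisimpleRing Rᵐᵒᵖ := isSemisimpleRing_op R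
    exact ⟨hasSIP_of_semisimple, fun M _ _ => hasCover_self R hasSIP_of_semisimple⟩
  tfae_have 2 → 3 := fun h => ⟨h.1, fun M _ _ _ => h.2 M⟩
  tfae_have 3 → 1 := by
    rintro ⟨hr, hc⟩
    exact imp31 hr fun m hm =>
      hasSIP_of_cover R hr (hNsip m hm) (hc _ (twoGen_prod R m))
  tfae_have 1 → 4 := by
    intro h1
    haveI := h1
    haveI : IsSemisimpleRing Rᵐᵒᵖ := isSemisimpleRing_op R
    exact ⟨hasSIP_of_semisimple, fun M _ _ => hasEnvelope_self R hasSIP_of_semisimple⟩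
  tfae_have 4 → 5 := fun h => ⟨h.1, fun M _ _ _ => h.2 M⟩
  tfae_have 5 → 1 := by
    rintro ⟨hr, hc⟩
    exact imp31 hr fun m hm =>
      hasSIP_of_envelope R hr (hNsip m hm) (hc _ (twoGen_prod R m))
  tfae_finish
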